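/- Let E be a real inner product space of finite dimension n ≥ 2, let p₀ ∈ E and r ≥ 0, and define d : E → ℝ by d(y) = ‖y − p₀‖ − r. Let x ≠ p₀, let φ : E → ℝ be twice continuously differentiable near x, let ψ : ℝ → ℝ be twice continuously differentiable, and set w := φ + ψ ∘ d. Write ∇ for gradient, ∇² for the Hessian bilinear form, and E_n := ∇d(x) = (x − p₀)/‖x − p₀‖. Then ∇²w(∇w, ∇w)(x) = ∇²φ(∇φ, ∇φ)(x) + ψ'(d(x))·[2∇²φ(E_n, ∇φ)(x) + ∇²d(∇φ, ∇φ)(x)] + (ψ'(d(x)))²·∇²φ(E_n, E_n)(x) + ψ''(d(x))·(⟨∇φ(x), E_n⟩ + ψ'(d(x)))². -/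

import Mathlib

open scoped RealInnerProductSpace

theorem hasFDerivAt_norm'' {E : Type*} [NormedAddCommGroup E] [InnerProductSpace ℝ E]
    {y : E} (hy : y ≠ 0) :
    HasFDerivAt (fun z : E => ‖z‖) (‖y‖⁻¹ • innerSL ℝ y) y := by
  have hny : ‖y‖ ≠ 0 := norm_ne_zero_iff.mpr hy
  have h1 : HasFDerivAt (fun z : E => ‖z‖ ^ 2) (2 • innerSL ℝ y) y :=
    (hasStrictFDerivAt_norm_sq y).hasFDerivAt
  have h2 : HasDerivAt Real.sqrt (1 / (2 * Real.sqrt (‖y‖ ^ 2))) (‖y‖ ^ 2) :=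
    Real.hasDerivAt_sqrt (by positivity)
  have h3 := h2.comp_hasFDerivAt y h1
  have h4 : (Real.sqrt ∘ fun z : E => ‖z‖ ^ 2) = fun z : E => ‖z‖ := by
    funext z; simp [Real.sqrt_sq (norm_nonneg z)]
  rw [h4] at h3
  refine h3.congr_fderiv ?_; symm
  ext v
  simp only [Real.sqrt_sq (norm_nonneg y), ContinuousLinearMap.smul_apply, smul_eq_mul]
  show _ = (1 / (2 * ‖y‖)) * ((2 • innerSL ℝ y) v)
  rw [two_smul, ContinuousLinearMap.add_apply]
  field_simp
  ring

/-- Euclidean instance of Lemma 2 (LbHw): the formula (Hw) for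
`∇²w(∇w, ∇w)` at `x`, where `w = φ + ψ ∘ d` and `d(y) = ‖y - p₀‖ - r`. -/
theorem stmt_17 {E : Type*} [NormedAddCommGroup E] [InnerProductSpace ℝ E]
    [FiniteDimensional ℝ E] (n : ℕ) (hn : 2 ≤ n)
    (hdim : Module.finrank ℝ E = n)
    (p₀ x : E) (r : ℝ) (hr : 0 ≤ r) (hx : x ≠ p₀)
    (d : E → ℝ) (hd : d = fun y => ‖y - p₀‖ - r)
    (φ : E → ℝ) (hφ : ContDiffAt ℝ 2 φ x)
    (ψ : ℝ → ℝ) (hψ : ContDiff ℝ 2 ψ)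
    (w : E → ℝ) (hw : w = fun y => φ y + ψ (d y))
    (En : E) (hEn : En = ‖x - p₀‖⁻¹ • (x - p₀)) :
    fderiv ℝ (fderiv ℝ w) x (gradient w x) (gradient w x) =
      fderiv ℝ (fderiv ℝ φ) x (gradient φ x) (gradient φ x) +
        deriv ψ (d x) *
          (2 * fderiv ℝ (fderiv ℝ φ) x En (gradient φ x) +
            fderiv ℝ (fderiv ℝ d) x (gradient φ x) (gradient φ x)) +
        (deriv ψ (d x)) ^ 2 * fderiv ℝ (fderiv ℝ φ) x En En +
        deriv (deriv ψ) (d x) * (⟪gradient φ x, En⟫ + deriv ψ (d x)) ^ 2 := by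
  have hx0 : x - p₀ ≠ 0 := sub_ne_zero.mpr hx
  set m : ℝ := ‖x - p₀‖ with hm
  have hm0 : m ≠ 0 := norm_ne_zero_iff.mpr hx0
  -- derivative of d
  set F : E → E →L[ℝ] ℝ := fun y => ‖y - p₀‖⁻¹ • innerSL ℝ (y - p₀) with hF
  have hFd : ∀ y : E, y ≠ p₀ → HasFDerivAt d (F y) y := by
    intro y hy
    have hsub : HasFDerivAt (fun z : E => z - p₀) (ContinuousLinearMap.id ℝ E) y :=
      (hasFDerivAt_id y).sub_const p₀
    have h1 := (hasFDerivAt_norm'' (sub_ne_zero.mpr hy)).comp y hsub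
    have h2 : HasFDerivAt (fun z : E => ‖z - p₀‖ - r)
        ((‖y - p₀‖⁻¹ • innerSL ℝ (y - p₀)).comp (ContinuousLinearMap.id ℝ E)) y :=
      h1.sub_const r
    rw [ContinuousLinearMap.comp_id] at h2
    rw [hd]; exact h2
  have hnhd : ∀ᶠ y in nhds x, y ≠ p₀ := eventually_ne_nhds hx
  have hfd_eq : fderiv ℝ d =ᶠ[nhds x] F := hnhd.mono fun y hy => (hFd y hy).fderiv
  -- second derivative of d
  set c' : E →L[ℝ] ℝ := (-(m ^ 2)⁻¹) • (m⁻¹ • innerSL ℝ (x - p₀)) with hc'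
  have hc : HasFDerivAt (fun y : E => ‖y - p₀‖⁻¹) c' x := by
    have hsub : HasFDerivAt (fun z : E => z - p₀) (ContinuousLinearMap.id ℝ E) x :=
      (hasFDerivAt_id x).sub_const p₀
    have h1 := (hasFDerivAt_norm'' hx0).comp x hsub
    have h2 := ((hasStrictDerivAt_inv hm0).hasDerivAt).comp_hasFDerivAt x
      (by simpa [Function.comp] using h1)
    simpa [Function.comp_def, hc', smul_smul, ← hm] using h2
  have hG : HasFDerivAt (fun y : E => innerSL ℝ (y - p₀))
      (innerSL ℝ : E →L[ℝ] E →L[ℝ] ℝ) x := by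
    have : (fun y : E => innerSL ℝ (y - p₀)) =
        fun y : E => (innerSL ℝ : E →L[ℝ] E →L[ℝ] ℝ) y - innerSL ℝ p₀ := by
      funext y; simp [map_sub]
    rw [this]
    exact ((innerSL ℝ : E →L[ℝ] E →L[ℝ] ℝ).hasFDerivAt).sub_const _
  have hFH : HasFDerivAt F _ x :=
    hc.smul hG
  have hHval : ∀ u v : E, fderiv ℝ (fderiv ℝ d) x u v
      = m⁻¹ * ⟪u, v⟫ + (c' u) * ⟪x - p₀, v⟫ := by
    intro u v
    rw [hfd_eq.fderiv_eq, hFH.fderiv]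
    simp [ContinuousLinearMap.add_apply, ContinuousLinearMap.smul_apply,
      ContinuousLinearMap.smulRight_apply, innerSL_apply_apply, smul_eq_mul, inner_sub_left, ← hm,
      (show ∀ a b : E, (innerSL ℝ : E →L[ℝ] E →L[ℝ] ℝ) a b = ⟪a, b⟫ from fun _ _ => rfl)]
  have hc'val : ∀ u : E, c' u = -(m ^ 2)⁻¹ * (m⁻¹ * ⟪x - p₀, u⟫) := by
    intro u
    simp [hc', ContinuousLinearMap.smul_apply, innerSL_apply_apply, smul_eq_mul, inner_sub_left]
  -- inner product facts
  have hxpxp : ⟪x - p₀, x - p₀⟫ = m ^ 2 := real_inner_self_eq_norm_sq _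
  have hEnu : ∀ u : E, ⟪En, u⟫ = m⁻¹ * ⟪x - p₀, u⟫ := by
    intro u; rw [hEn, real_inner_smul_left]
  have hxpEn : ⟪x - p₀, En⟫ = m := by
    rw [hEn, real_inner_smul_right, hxpxp]; field_simp
  have hEnEn : ⟪En, En⟫ = (1 : ℝ) := by
    rw [hEnu, hxpEn]; field_simp
  -- Hessian of d kills En
  have hkillR : ∀ u : E, fderiv ℝ (fderiv ℝ d) x u En = 0 := by
    intro u
    have h1 : ⟪u, En⟫ = m⁻¹ * ⟪x - p₀, u⟫ := by rw [real_inner_comm]; exact hEnu u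
    rw [hHval, hc'val, hxpEn, h1]
    field_simp
    ring
  have hkillL : ∀ v : E, fderiv ℝ (fderiv ℝ d) x En v = 0 := by
    intro v
    rw [hHval, hc'val, hEnu, hxpEn, real_inner_comm]
    field_simp
    ring
  -- the composed function s = ψ ∘ d
  set s : E → ℝ := fun y => ψ (d y) with hs
  have hψ1 : Differentiable ℝ ψ := hψ.differentiable two_ne_zero
  have hψd : ContDiff ℝ 1 (deriv ψ) := by
    have h2 : (2 : WithTop ℕ∞) = 1 + 1 := by norm_num
    exact (contDiff_succ_iff_deriv.mp (h2 ▸ hψ)).2.2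
  have hψd1 : Differentiable ℝ (deriv ψ) := hψd.differentiable one_ne_zero
  have hsd : ∀ y : E, y ≠ p₀ → HasFDerivAt s (deriv ψ (d y) • F y) y := by
    intro y hy
    exact ((hψ1 (d y)).hasDerivAt).comp_hasFDerivAt y (hFd y hy)
  have hfs_eq : fderiv ℝ s =ᶠ[nhds x] fun y => deriv ψ (d y) • F y :=
    hnhd.mono fun y hy => (hsd y hy).fderiv
  -- second derivative of s
  have hc₂ : HasFDerivAt (fun y : E => deriv ψ (d y)) (deriv (deriv ψ) (d x) • F x) x :=
    ((hψd1 (d x)).hasDerivAt).comp_hasFDerivAt x (hFd x hx)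
  have hG₂ : HasFDerivAt (fun y => deriv ψ (d y) • F y) _ x := hc₂.smul hFH
  have hs''val : ∀ u v : E, fderiv ℝ (fderiv ℝ s) x u v
      = deriv ψ (d x) * fderiv ℝ (fderiv ℝ d) x u v
        + deriv (deriv ψ) (d x) * (F x u) * (F x v) := by
    intro u v
    rw [hfs_eq.fderiv_eq, hG₂.fderiv, hfd_eq.fderiv_eq, hFH.fderiv]
    simp only [ContinuousLinearMap.add_apply, ContinuousLinearMap.smul_apply,
      ContinuousLinearMap.smulRight_apply, smul_eq_mul, hF, innerSL_apply_apply,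
      inner_sub_left]
  have hFxval : ∀ u : E, F x u = ⟪En, u⟫ := by
    intro u
    simp [hF, ContinuousLinearMap.smul_apply, innerSL_apply_apply, smul_eq_mul, hEnu, ← hm,
      inner_sub_left]
  have hφev : ∀ᶠ y in nhds x, DifferentiableAt ℝ φ y :=
    (hφ.eventually (by norm_num)).mono fun y hy => hy.differentiableAt two_ne_zero
  have hwd : fderiv ℝ w =ᶠ[nhds x] fun y => fderiv ℝ φ y + fderiv ℝ s y := by
    filter_upwards [hφev, hnhd] with y h1 h2
    rw [hw]
    exact fderiv_add h1 (hsd y h2).differentiableAt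
  have hfw : fderiv ℝ w x = fderiv ℝ φ x + deriv ψ (d x) • F x := by
    rw [hw, fderiv_fun_add (hφ.differentiableAt two_ne_zero) (hsd x hx).differentiableAt,
      (hsd x hx).fderiv]
  have hgradw : gradient w x = gradient φ x + deriv ψ (d x) • En := by
    unfold gradient
    rw [hfw, map_add]
    congr 1
    have hFx : F x = (InnerProductSpace.toDual ℝ E) En := by
      ext u; rw [InnerProductSpace.toDual_apply_apply]; exact hFxval u
    rw [hFx, map_smulₛₗ]
    simp
  have hφ'd : DifferentiableAt ℝ (fderiv ℝ φ) x :=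
    (hφ.fderiv_right (m := 1) (by norm_num)).differentiableAt one_ne_zero
  have hs'd : DifferentiableAt ℝ (fderiv ℝ s) x :=
    hfs_eq.differentiableAt_iff.mpr hG₂.differentiableAt
  have hw''val : ∀ u v : E, fderiv ℝ (fderiv ℝ w) x u v
      = fderiv ℝ (fderiv ℝ φ) x u v + fderiv ℝ (fderiv ℝ s) x u v := by
    intro u v
    rw [hwd.fderiv_eq, fderiv_fun_add hφ'd hs'd]
    simp [ContinuousLinearMap.add_apply]
  have hsym : IsSymmSndFDerivAt ℝ φ x := hφ.isSymmSndFDerivAt (by simp)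
  have hcomm : ⟪En, gradient φ x⟫ = ⟪gradient φ x, En⟫ := real_inner_comm _ _
  rw [hgradw]
  simp only [hw''val, hs''val, map_add, map_smul, ContinuousLinearMap.add_apply,
    ContinuousLinearMap.smul_apply, smul_eq_mul, hFxval, hkillR, hkillL, hEnEn,
    hcomm]
  rw [hsym.eq (gradient φ x) En]
  ring
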